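/- Let n ≥ 3 be an integer, r > 0, let (S, σ) be a measure space, let f : (0, r) → ℝ be differentiable with f > 0, and let J : (0, r) × S → ℝ be positive and differentiable in the first variable, satisfying f'(t)·J(t, ξ) − (∂ₜJ)(t, ξ)·f(t) ≤ 0 for all (t, ξ) ∈ (0, r) × S. Let e₁ : S → ℝ and w : S → [0, ∞) be measurable and define d*(t) = ∫_S e₁(ξ)²·J(t, ξ)^{n-1} dσ(ξ) and d♯(t) = ∫_S w(ξ)·J(t, ξ)^{n-3} dσ(ξ); assume both are finite, positive, and differentiable with derivative given by differentiation under the integral sign. Define h(t) = max{ d*(t), f(t)²·d♯(t)/(n-1) }. Then the function t ↦ f(t)^{n-1}/h(t) is nonincreasing on (0, r). -/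

import Mathlib

open Set MeasureTheory

/-- Bishop-comparison monotonicity for `h = max{d*, f²·d♯/(n-1)}`: if
`f'·J − ∂ₜJ·f ≤ 0` on `(0, r) × S`, then `t ↦ f(t)^{n-1} / h(t)` is nonincreasing,
where `d*(t) = ∫_S e₁²·J^{n-1} dσ` and `d♯(t) = ∫_S w·J^{n-3} dσ`. -/
theorem model_quotient_h_antitone
    {S : Type*} [MeasurableSpace S] (σ : Measure S)
    (n : ℕ) (hn : 3 ≤ n) (r : ℝ) (hr : 0 < r)
    (f f' : ℝ → ℝ) (J J' : ℝ → S → ℝ) (e₁ w : S → ℝ) (dstar dsharp : ℝ → ℝ)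
    (hfd : ∀ t ∈ Ioo (0:ℝ) r, HasDerivAt f (f' t) t)
    (hfpos : ∀ t ∈ Ioo (0:ℝ) r, 0 < f t)
    (hJd : ∀ t ∈ Ioo (0:ℝ) r, ∀ ξ : S, HasDerivAt (fun s => J s ξ) (J' t ξ) t)
    (hJpos : ∀ t ∈ Ioo (0:ℝ) r, ∀ ξ : S, 0 < J t ξ)
    (hcomp : ∀ t ∈ Ioo (0:ℝ) r, ∀ ξ : S, f' t * J t ξ - J' t ξ * f t ≤ 0)
    (he₁ : Measurable e₁) (hw : Measurable w) (hwnn : ∀ ξ : S, 0 ≤ w ξ)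
    (hdstar : ∀ t ∈ Ioo (0:ℝ) r, dstar t = ∫ ξ, e₁ ξ ^ 2 * J t ξ ^ (n - 1) ∂σ)
    (hdstarint : ∀ t ∈ Ioo (0:ℝ) r, Integrable (fun ξ => e₁ ξ ^ 2 * J t ξ ^ (n - 1)) σ)
    (hdstarpos : ∀ t ∈ Ioo (0:ℝ) r, 0 < dstar t)
    (hdstarderiv : ∀ t ∈ Ioo (0:ℝ) r,
      HasDerivAt dstar
        (∫ ξ, e₁ ξ ^ 2 * (((n : ℝ) - 1) * J t ξ ^ (n - 2) * J' t ξ) ∂σ) t)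
    (hdsharp : ∀ t ∈ Ioo (0:ℝ) r, dsharp t = ∫ ξ, w ξ * J t ξ ^ (n - 3) ∂σ)
    (hdsharpint : ∀ t ∈ Ioo (0:ℝ) r, Integrable (fun ξ => w ξ * J t ξ ^ (n - 3)) σ)
    (hdsharppos : ∀ t ∈ Ioo (0:ℝ) r, 0 < dsharp t)
    (hdsharpderiv : ∀ t ∈ Ioo (0:ℝ) r,
      HasDerivAt dsharp
        (∫ ξ, w ξ * (((n : ℝ) - 3) * J t ξ ^ (n - 4) * J' t ξ) ∂σ) t) :
    AntitoneOn
      (fun t => f t ^ (n - 1) / max (dstar t) (f t ^ 2 * dsharp t / ((n : ℝ) - 1)))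
      (Ioo 0 r) := by

  -- ratio monotonicity of J/f
  have hratio : ∀ ξ : S, ∀ a ∈ Ioo (0:ℝ) r, ∀ b ∈ Ioo (0:ℝ) r, a ≤ b →
      J a ξ / f a ≤ J b ξ / f b := by
    intro ξ
    have hm : MonotoneOn (fun t => J t ξ / f t) (Ioo 0 r) := by
      apply monotoneOn_of_deriv_nonneg (convex_Ioo 0 r)
      · intro t ht
        exact ((hJd t ht ξ).div (hfd t ht) (hfpos t ht).ne').continuousAt.continuousWithinAt
      · rw [interior_Ioo]
        intro t ht
        exact ((hJd t ht ξ).div (hfd t ht) (hfpos t ht).ne').differentiableAt.differentiableWithinAt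
      · rw [interior_Ioo]
        intro t ht
        rw [show deriv (fun t => J t ξ / f t) t = _ from ((hJd t ht ξ).div (hfd t ht) (hfpos t ht).ne').deriv]
        have h1 := hcomp t ht ξ
        have h2 := hfpos t ht
        apply div_nonneg _ (by positivity)
        nlinarith
    exact fun a ha b hb hab => hm ha hb hab
  -- general monotonicity of d / f^k
  have key : ∀ (u : S → ℝ), (∀ ξ, 0 ≤ u ξ) → ∀ (k : ℕ) (d : ℝ → ℝ),
      (∀ t ∈ Ioo (0:ℝ) r, d t = ∫ ξ, u ξ * J t ξ ^ k ∂σ) →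
      (∀ t ∈ Ioo (0:ℝ) r, Integrable (fun ξ => u ξ * J t ξ ^ k) σ) →
      ∀ a ∈ Ioo (0:ℝ) r, ∀ b ∈ Ioo (0:ℝ) r, a ≤ b → d a / f a ^ k ≤ d b / f b ^ k := by
    intro u hu k d hd hint a ha b hb hab
    have hfa := hfpos a ha
    have hfb := hfpos b hb
    have hrw : ∀ t, t ∈ Ioo (0:ℝ) r → ∀ ξ,
        (f t ^ k)⁻¹ * (u ξ * J t ξ ^ k) = u ξ * (J t ξ / f t) ^ k := by
      intro t ht ξ
      rw [div_pow]
      ring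
    have h1 : ∀ t ∈ Ioo (0:ℝ) r,
        d t / f t ^ k = ∫ ξ, u ξ * (J t ξ / f t) ^ k ∂σ := by
      intro t ht
      rw [hd t ht, div_eq_inv_mul, ← integral_const_mul]
      exact integral_congr_ae (Filter.Eventually.of_forall (hrw t ht))
    rw [h1 a ha, h1 b hb]
    apply integral_mono
    · have := (hint a ha).const_mul (f a ^ k)⁻¹
      exact this.congr (Filter.Eventually.of_forall (hrw a ha))
    · have := (hint b hb).const_mul (f b ^ k)⁻¹
      exact this.congr (Filter.Eventually.of_forall (hrw b hb))
    · intro ξ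
      exact mul_le_mul_of_nonneg_left
        (pow_le_pow_left₀ (div_nonneg (hJpos a ha ξ).le hfa.le) (hratio ξ a ha b hb hab) k)
        (hu ξ)
  intro a ha b hb hab
  have hfa := hfpos a ha
  have hfb := hfpos b hb
  have hNpos : (0:ℝ) < (n:ℝ) - 1 := by
    have : (3:ℝ) ≤ (n:ℝ) := by exact_mod_cast hn
    linarith
  have hMa : 0 < max (dstar a) (f a ^ 2 * dsharp a / ((n:ℝ) - 1)) :=
    lt_max_of_lt_left (hdstarpos a ha)
  have hMb : 0 < max (dstar b) (f b ^ 2 * dsharp b / ((n:ℝ) - 1)) :=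
    lt_max_of_lt_left (hdstarpos b hb)
  simp only
  rw [div_le_div_iff₀ hMb hMa]
  -- first component
  have hstar := key (fun ξ => e₁ ξ ^ 2) (fun ξ => sq_nonneg _) (n - 1) dstar hdstar hdstarint
    a ha b hb hab
  have hi : f b ^ (n - 1) * dstar a ≤ f a ^ (n - 1) * dstar b := by
    rw [div_le_div_iff₀ (by positivity) (by positivity)] at hstar
    nlinarith [hstar]
  have hsharp := key w hwnn (n - 3) dsharp hdsharp hdsharpint a ha b hb hab
  have hii0 : dsharp a * f b ^ (n - 3) ≤ dsharp b * f a ^ (n - 3) := by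
    rw [div_le_div_iff₀ (by positivity) (by positivity)] at hsharp
    linarith
  have hpa : f a ^ (n - 1) = f a ^ (n - 3) * f a ^ 2 := by
    rw [← pow_add]
    congr 1
    omega
  have hpb : f b ^ (n - 1) = f b ^ (n - 3) * f b ^ 2 := by
    rw [← pow_add]
    congr 1
    omega
  have hii : f b ^ (n - 1) * (f a ^ 2 * dsharp a / ((n:ℝ) - 1)) ≤
      f a ^ (n - 1) * (f b ^ 2 * dsharp b / ((n:ℝ) - 1)) := by
    rw [hpa, hpb]
    have h3 := mul_le_mul_of_nonneg_right hii0
      (le_of_lt (by positivity : (0:ℝ) < f a ^ 2 * f b ^ 2 / ((n:ℝ) - 1)))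
    calc f b ^ (n - 3) * f b ^ 2 * (f a ^ 2 * dsharp a / ((n:ℝ) - 1))
        = dsharp a * f b ^ (n - 3) * (f a ^ 2 * f b ^ 2 / ((n:ℝ) - 1)) := by ring
      _ ≤ dsharp b * f a ^ (n - 3) * (f a ^ 2 * f b ^ 2 / ((n:ℝ) - 1)) := h3
      _ = f a ^ (n - 3) * f a ^ 2 * (f b ^ 2 * dsharp b / ((n:ℝ) - 1)) := by ring
  calc f b ^ (n - 1) * max (dstar a) (f a ^ 2 * dsharp a / ((n:ℝ) - 1))
      = max (f b ^ (n - 1) * dstar a) (f b ^ (n - 1) * (f a ^ 2 * dsharp a / ((n:ℝ) - 1))) := by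
        rw [mul_max_of_nonneg _ _ (by positivity)]
    _ ≤ f a ^ (n - 1) * max (dstar b) (f b ^ 2 * dsharp b / ((n:ℝ) - 1)) := by
        apply max_le
        · exact le_trans hi (mul_le_mul_of_nonneg_left (le_max_left _ _) (by positivity))
        · exact le_trans hii (mul_le_mul_of_nonneg_left (le_max_right _ _) (by positivity))
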